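/- For any finite lattice L (meet-closed), the maximal number of rows of the complemented structure matrix A^c of L that are independent over the superboolean semiring equals the height of L (the length of a maximal strict chain in L). -/

import Mathlib

open scoped Classical

/-- The superboolean semiring `SB = {0, 1, 1^ν}`. -/
def SB := Fin 3

instance : DecidableEq SB := inferInstanceAs (DecidableEq (Fin 3))
instance : Fintype SB := inferInstanceAs (Fintype (Fin 3))

def SB.zero : SB := (0 : Fin 3)
def SB.one : SB := (1 : Fin 3)
/-- The ghost element `1^ν`. -/
def SB.nu : SB := (2 : Fin 3)

def SB.val (a : SB) : ℕ := Fin.val a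

instance : Zero SB := ⟨SB.zero⟩
instance : One SB := ⟨SB.one⟩

def SB.add (a b : SB) : SB := (⟨min (a.val + b.val) 2, by omega⟩ : Fin 3)
def SB.mul (a b : SB) : SB := (⟨min (a.val * b.val) 2, by omega⟩ : Fin 3)

instance : Add SB := ⟨SB.add⟩
instance : Mul SB := ⟨SB.mul⟩

instance : AddCommMonoid SB where
  add := (· + ·)
  add_assoc := by decide
  zero_add := by decide
  add_zero := by decide
  add_comm := by decide
  nsmul := nsmulRec

instance : CommMonoid SB where
  mul := (· * ·)
  mul_assoc := by decide
  one_mul := by decide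
  mul_one := by decide
  mul_comm := by decide
  npow := npowRec

/-- The permanent of a square superboolean matrix. -/
def sbPer {n : ℕ} (A : Matrix (Fin n) (Fin n) SB) : SB :=
  ∑ π : Equiv.Perm (Fin n), ∏ i, A (π i) i

/-- A square superboolean matrix is nonsingular when its permanent is `1`. -/
def Nonsingular {n : ℕ} (A : Matrix (Fin n) (Fin n) SB) : Prop := sbPer A = SB.one

/-- Membership in the ghost ideal `{0, 1^ν}`. -/
def SB.IsGhost (a : SB) : Prop := a = SB.zero ∨ a = SB.nu

/-- A family of superboolean vectors is dependent if some nontrivial boolean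
combination of them lies entirely in the ghost ideal. -/
def SBDep {κ ι : Type*} [Fintype κ] (v : κ → ι → SB) : Prop :=
  ∃ α : κ → SB, (∀ k, α k = SB.zero ∨ α k = SB.one) ∧ (∃ k, α k ≠ SB.zero) ∧
    ∀ j : ι, SB.IsGhost (∑ k, α k * v k j)

/-- Independence of a family of superboolean vectors. -/
def SBIndep {κ ι : Type*} [Fintype κ] (v : κ → ι → SB) : Prop := ¬ SBDep v

/-- A matrix is boolean if none of its entries is the ghost `1^ν`. -/
def IsBooleanMat {ι κ : Type*} (A : Matrix ι κ SB) : Prop := ∀ i j, A i j ≠ SB.nu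
/-- The complemented structure matrix of a finite (pre)ordered set `L`:
entry `(x, y)` is `1` iff `x ≰ y`, and `0` iff `x ≤ y`. -/
noncomputable def Ac (L : Type*) [Preorder L] : Matrix L L SB :=
  fun x y => if x ≤ y then SB.zero else SB.one



lemma SB.add_eq_zero_iff : ∀ a b : SB, a + b = SB.zero ↔ a = SB.zero ∧ b = SB.zero := by decide
lemma SB.add_eq_one_iff : ∀ a b : SB, a + b = SB.one ↔ (a = SB.zero ∧ b = SB.one) ∨ (a = SB.one ∧ b = SB.zero) := by decide

lemma sb_sum_eq_zero {ι : Type*} (s : Finset ι) (f : ι → SB) :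
    (∑ i ∈ s, f i) = SB.zero → ∀ i ∈ s, f i = SB.zero := by
  induction s using Finset.cons_induction with
  | empty => intro _ i hi; exact absurd hi (Finset.notMem_empty i)
  | cons a s ha ih =>
    intro h i hi
    rw [Finset.sum_cons] at h
    obtain ⟨h1, h2⟩ := (SB.add_eq_zero_iff _ _).mp h
    rcases Finset.mem_cons.mp hi with rfl | hi'
    · exact h1
    · exact ih h2 i hi'

lemma sb_sum_eq_one {ι : Type*} (s : Finset ι) (f : ι → SB) :
    (∑ i ∈ s, f i) = SB.one → ∃ i ∈ s, f i = SB.one ∧ ∀ j ∈ s, j ≠ i → f j = SB.zero := by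
  induction s using Finset.cons_induction with
  | empty =>
    intro h
    rw [Finset.sum_empty] at h
    exact absurd h (by decide)
  | cons a s ha ih =>
    intro h
    rw [Finset.sum_cons] at h
    rcases (SB.add_eq_one_iff _ _).mp h with ⟨h1, h2⟩ | ⟨h1, h2⟩
    · obtain ⟨i, hi, hfi, hrest⟩ := ih h2
      refine ⟨i, Finset.mem_cons.mpr (Or.inr hi), hfi, ?_⟩
      intro j hj hji
      rcases Finset.mem_cons.mp hj with rfl | hj'
      · exact h1
      · exact hrest j hj' hji
    · refine ⟨a, Finset.mem_cons_self a s, h1, ?_⟩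
      intro j hj hja
      rcases Finset.mem_cons.mp hj with rfl | hj'
      · exact absurd rfl hja
      · exact sb_sum_eq_zero s f h2 j hj'

lemma sb_sum_eq_one_of {ι : Type*} [DecidableEq ι] (s : Finset ι) (f : ι → SB) (i : ι)
    (hi : i ∈ s) (h1 : f i = SB.one) (h0 : ∀ j ∈ s, j ≠ i → f j = SB.zero) :
    (∑ j ∈ s, f j) = SB.one := by
  rw [← Finset.add_sum_erase s f hi, h1,
    Finset.sum_eq_zero (fun j hj => h0 j (Finset.mem_of_mem_erase hj) (Finset.ne_of_mem_erase hj))]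
  decide

lemma SB.zero_mul' : ∀ b : SB, SB.zero * b = SB.zero := by decide
lemma SB.one_mul' : ∀ b : SB, SB.one * b = b := by decide
lemma SB.mul_zero' : ∀ a : SB, a * SB.zero = SB.zero := by decide
lemma SB.cases_three : ∀ a : SB, a = SB.zero ∨ a = SB.one ∨ a = SB.nu := by decide

lemma SB.not_ghost_one (a : SB) (h : ¬ SB.IsGhost a) : a = SB.one := by
  rcases SB.cases_three a with h0 | h1 | h2
  · exact absurd (Or.inl h0) h
  · exact h1
  · exact absurd (Or.inr h2) h

lemma SB.one_not_ghost : ¬ SB.IsGhost SB.one := fun h =>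
  h.elim (fun h => absurd h (by decide)) (fun h => absurd h (by decide))
lemma SB.one_ne_zero' : SB.one ≠ SB.zero := by decide

lemma Ac_eq_one {L : Type*} [Preorder L] {x y : L} (h : ¬ x ≤ y) : Ac L x y = SB.one := by
  simp [Ac, h]

lemma Ac_eq_zero {L : Type*} [Preorder L] {x y : L} (h : x ≤ y) : Ac L x y = SB.zero := by
  simp [Ac, h]

/-- From independence, every nonempty subset of rows has a column where exactly one
row in the subset has a `1`. -/
lemma exists_column {L : Type*} [Preorder L] {k : ℕ} {w : Fin k → L}
    (hind : SBIndep (fun i (y : L) => Ac L (w i) y))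
    (S : Finset (Fin k)) (hS : S.Nonempty) :
    ∃ y : L, ∃ i ∈ S, ¬ w i ≤ y ∧ ∀ j ∈ S, j ≠ i → w j ≤ y := by
  set α : Fin k → SB := fun j => if j ∈ S then SB.one else SB.zero with hα
  have h1 : ∀ j, α j = SB.zero ∨ α j = SB.one := by
    intro j; by_cases h : j ∈ S <;> simp [hα, h]
  obtain ⟨j0, hj0⟩ := hS
  have h2 : ∃ j, α j ≠ SB.zero := ⟨j0, by simp [hα, hj0]; exact SB.one_ne_zero'⟩
  have hy : ∃ y, ¬ SB.IsGhost (∑ j, α j * Ac L (w j) y) := by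
    by_contra hh
    push_neg at hh
    exact hind ⟨α, h1, h2, hh⟩
  obtain ⟨y, hy⟩ := hy
  have hone : (∑ j, α j * Ac L (w j) y) = SB.one := SB.not_ghost_one _ hy
  obtain ⟨i, _, hfi, hrest⟩ := sb_sum_eq_one _ _ hone
  have hiS : i ∈ S := by
    by_contra hiS
    rw [show α i = SB.zero by simp [hα, hiS], SB.zero_mul'] at hfi
    exact SB.one_ne_zero' hfi.symm
  have hwi : ¬ w i ≤ y := by
    intro hle
    rw [Ac_eq_zero hle, SB.mul_zero'] at hfi
    exact SB.one_ne_zero' hfi.symm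
  refine ⟨y, i, hiS, hwi, ?_⟩
  intro j hjS hji
  by_contra hle
  have := hrest j (Finset.mem_univ j) hji
  rw [show α j = SB.one by simp [hα, hjS], Ac_eq_one hle, SB.one_mul'] at this
  exact SB.one_ne_zero' this

lemma strictMono_snoc {α : Type*} [Preorder α] {n : ℕ} {c : Fin (n + 1) → α} {t : α}
    (hc : StrictMono c) (h : c (Fin.last n) < t) : StrictMono (Fin.snoc c t) := by
  intro a b hab
  induction b using Fin.lastCases with
  | last =>
    obtain ⟨a', rfl⟩ := Fin.exists_castSucc_eq.mpr (ne_of_lt hab)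
    rw [Fin.snoc_castSucc, Fin.snoc_last]
    exact lt_of_le_of_lt (hc.monotone (Fin.le_last a')) h
  | cast b' =>
    have ha : a ≠ Fin.last (n + 1) :=
      ne_of_lt (lt_of_lt_of_le hab (Fin.le_last _))
    obtain ⟨a', rfl⟩ := Fin.exists_castSucc_eq.mpr ha
    rw [Fin.snoc_castSucc, Fin.snoc_castSucc]
    exact hc (by exact_mod_cast hab)

/-- From independent rows, build a chain of length `S.card` with top `t`. -/
lemma chain_of_indep {L : Type*} [Lattice L] {k : ℕ} {w : Fin k → L}
    (hind : SBIndep (fun i (y : L) => Ac L (w i) y)) :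
    ∀ (n : ℕ) (S : Finset (Fin k)), S.card = n → ∀ t : L, (∀ i ∈ S, w i ≤ t) →
      ∃ c : Fin (n + 1) → L, StrictMono c ∧ c (Fin.last n) = t := by
  intro n
  induction n with
  | zero =>
    intro S _ t _
    refine ⟨fun _ => t, ?_, rfl⟩
    intro a b hab
    exact absurd (Fin.lt_def.mp hab) (by have := b.isLt; omega)
  | succ n ih =>
    intro S hcard t ht
    have hS : S.Nonempty := Finset.card_pos.mp (by omega)
    obtain ⟨y, i, hiS, hwi, hrest⟩ := exists_column hind S hS
    set t' : L := y ⊓ t with ht'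
    have ht't : t' < t := by
      refine lt_of_le_of_ne inf_le_right ?_
      intro he
      exact hwi (le_trans (ht i hiS) (le_trans he.symm.le inf_le_left))
    have hcard' : (S.erase i).card = n := by
      rw [Finset.card_erase_of_mem hiS, hcard]
      omega
    have ht'' : ∀ j ∈ S.erase i, w j ≤ t' := by
      intro j hj
      exact le_inf (hrest j (Finset.mem_of_mem_erase hj) (Finset.ne_of_mem_erase hj))
        (ht j (Finset.mem_of_mem_erase hj))
    obtain ⟨c', hc', hlast⟩ := ih (S.erase i) hcard' t' ht''
    refine ⟨Fin.snoc c' t, strictMono_snoc hc' (hlast ▸ ht't), Fin.snoc_last _ _⟩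

/-- For a finite lattice, the maximal number of independent rows of the complemented
structure matrix equals the height of the lattice. -/
theorem nook_eq_height {L : Type*} [Fintype L] [Lattice L] [BoundedOrder L] :
    ∃ h : ℕ,
      IsGreatest {n : ℕ | ∃ c : Fin (n + 1) → L, StrictMono c} h ∧
      IsGreatest {k : ℕ | ∃ w : Fin k → L, Function.Injective w ∧
        SBIndep (fun i (y : L) => Ac L (w i) y)} h := by
  classical
  have h0 : 0 ∈ {n : ℕ | ∃ c : Fin (n + 1) → L, StrictMono c} :=
    ⟨fun _ => (⊥ : L), fun a b hab => absurd (Fin.lt_def.mp hab) (by have := b.isLt; omega)⟩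
  have hbdd : BddAbove {n : ℕ | ∃ c : Fin (n + 1) → L, StrictMono c} := by
    refine ⟨Fintype.card L, fun n hn => ?_⟩
    obtain ⟨c, hc⟩ := hn
    have := Fintype.card_le_of_injective c hc.injective
    rw [Fintype.card_fin] at this
    omega
  set h := sSup {n : ℕ | ∃ c : Fin (n + 1) → L, StrictMono c} with hh
  have hmem : h ∈ {n : ℕ | ∃ c : Fin (n + 1) → L, StrictMono c} :=
    Nat.sSup_mem ⟨0, h0⟩ hbdd
  refine ⟨h, ⟨hmem, fun n hn => le_csSup hbdd hn⟩, ?_, ?_⟩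
  · -- membership: the rows indexed by a maximal chain (minus its bottom) are independent
    obtain ⟨c, hc⟩ := hmem
    refine ⟨fun i => c i.succ, fun a b hab => Fin.succ_injective _ (hc.injective hab), ?_⟩
    rintro ⟨α, hbool, ⟨k0, hk0⟩, hghost⟩
    set T := Finset.univ.filter (fun kk => α kk = SB.one) with hT
    have hTne : T.Nonempty := by
      refine ⟨k0, ?_⟩
      simp only [hT, Finset.mem_filter, Finset.mem_univ, true_and]
      exact (hbool k0).resolve_left hk0
    set i := T.max' hTne with hi
    have hαi : α i = SB.one := (Finset.mem_filter.mp (T.max'_mem hTne)).2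
    have hkey : (∑ kk, α kk * Ac L (c kk.succ) (c i.castSucc)) = SB.one := by
      apply sb_sum_eq_one_of _ _ i (Finset.mem_univ i)
      · have hlt : c i.castSucc < c i.succ := hc (Fin.castSucc_lt_succ (i := i))
        have hnle : ¬ c i.succ ≤ c i.castSucc := fun hle =>
          absurd (le_antisymm hle hlt.le) (ne_of_gt hlt)
        rw [hαi, Ac_eq_one hnle]
        decide
      · intro j _ hji
        rcases hbool j with hb0 | hb1
        · rw [hb0, SB.zero_mul']
        · have hjT : j ∈ T := by
            simp only [hT, Finset.mem_filter, Finset.mem_univ, true_and]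
            exact hb1
          have hlt : j < i := lt_of_le_of_ne (T.le_max' j hjT) hji
          have hle : c j.succ ≤ c i.castSucc := by
            apply hc.monotone
            rw [Fin.le_def, Fin.val_succ, Fin.coe_castSucc]
            exact Fin.lt_def.mp hlt
          rw [hb1, Ac_eq_zero hle, SB.mul_zero']
    have hg := hghost (c i.castSucc)
    rw [hkey] at hg
    exact SB.one_not_ghost hg
  · rintro k ⟨w, _, hind⟩
    obtain ⟨c, hc, _⟩ := chain_of_indep hind k Finset.univ (by simp) (⊤ : L) (fun i _ => le_top)
    exact le_csSup hbdd ⟨c, hc⟩
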